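/- Summing the per-step bounds, the inexact gradient method stopped after N iterations satisfies ‖x_N − x_0‖ ≤ 2NΔ√(1/L² + 1/(μL)) + (4/μ)√(L(f(x_0) − f*)), using that Σ_{k=0}^{∞} (1 − μ/L)^{k/2} ≤ 2L/μ. -/

import Mathlib

open scoped RealInnerProductSpace

theorem stmt11 {n : ℕ} (f : EuclideanSpace ℝ (Fin n) → ℝ) (L μ Δ fstar : ℝ)
    (hμ : 0 < μ) (hμL : μ ≤ L) (hΔ : 0 ≤ Δ)
    (hmin : ∀ y, fstar ≤ f y)
    (x : ℕ → EuclideanSpace ℝ (Fin n))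
    (hdist : ∀ k : ℕ, ‖x (k + 1) - x k‖ ≤
      2 * Δ * Real.sqrt (1 / L ^ 2 + 1 / (μ * L)) +
      2 * Real.sqrt ((1 - μ / L) ^ k) * Real.sqrt ((f (x 0) - fstar) / L)) :
    ∀ N : ℕ, ‖x N - x 0‖ ≤
      2 * N * Δ * Real.sqrt (1 / L ^ 2 + 1 / (μ * L)) +
      (4 / μ) * Real.sqrt (L * (f (x 0) - fstar)) := by
  intro N
  have hL : 0 < L := lt_of_lt_of_le hμ hμL
  set A := 2 * Δ * Real.sqrt (1 / L ^ 2 + 1 / (μ * L)) with hA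
  set D := f (x 0) - fstar with hD
  have hD0 : 0 ≤ D := sub_nonneg.2 (hmin (x 0))
  have hA0 : 0 ≤ A := by positivity
  have hr0 : (0:ℝ) ≤ 1 - μ / L := by
    have : μ / L ≤ 1 := (div_le_one hL).2 hμL
    linarith
  set s := Real.sqrt (1 - μ / L) with hs
  have hs0 : 0 ≤ s := Real.sqrt_nonneg _
  have hsle : s ≤ 1 - μ / (2 * L) := by
    have h2 : 0 ≤ 1 - μ / (2 * L) := by
      have : μ / (2 * L) ≤ 1 := by
        rw [div_le_one (by linarith)]; linarith
      linarith
    have h1 : 1 - μ / L ≤ (1 - μ / (2 * L)) ^ 2 := by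
      have he : (1 - μ / (2 * L)) ^ 2 = 1 - μ / L + (μ / (2 * L)) ^ 2 := by
        field_simp; ring
      nlinarith [sq_nonneg (μ / (2 * L))]
    calc s ≤ Real.sqrt ((1 - μ / (2 * L)) ^ 2) := Real.sqrt_le_sqrt h1
      _ = 1 - μ / (2 * L) := Real.sqrt_sq h2
  have hs1 : s < 1 := by
    have : 0 < μ / (2 * L) := by positivity
    linarith
  -- geometric sum bound
  have hsum : ∑ k ∈ Finset.range N, s ^ k ≤ 2 * L / μ := by
    have h1s : μ / (2 * L) ≤ 1 - s := by linarith
    have hμ2L : (0:ℝ) < μ / (2 * L) := by positivity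
    have h1spos : (0:ℝ) < 1 - s := lt_of_lt_of_le hμ2L h1s
    have heq : ∑ k ∈ Finset.range N, s ^ k = (1 - s ^ N) / (1 - s) := by
      rw [geom_sum_eq (ne_of_lt hs1), ← neg_div_neg_eq]; ring_nf
    rw [heq]
    have hb : (1 - s ^ N) / (1 - s) ≤ 1 / (1 - s) :=
      (div_le_div_iff_of_pos_right h1spos).mpr (by nlinarith [pow_nonneg hs0 N])
    have hc : 1 / (1 - s) ≤ 2 * L / μ := by
      have := one_div_le_one_div_of_le hμ2L h1s
      rwa [one_div_div] at this
    linarith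
  -- rewrite sqrt of pow
  have hpow : ∀ k : ℕ, Real.sqrt ((1 - μ / L) ^ k) = s ^ k := by
    intro k
    induction k with
    | zero => simp
    | succ k ih => rw [pow_succ, pow_succ, Real.sqrt_mul (pow_nonneg hr0 k), ih]
  set B := Real.sqrt (D / L) with hB
  have hB0 : 0 ≤ B := Real.sqrt_nonneg _
  have tele : ‖x N - x 0‖ ≤ ∑ k ∈ Finset.range N, ‖x (k + 1) - x k‖ := by
    have h := dist_le_range_sum_dist x N
    simpa [dist_eq_norm, norm_sub_rev] using h
  have hsum2 : ∑ k ∈ Finset.range N, ‖x (k + 1) - x k‖ ≤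
      N * A + 2 * B * ∑ k ∈ Finset.range N, s ^ k := by
    calc ∑ k ∈ Finset.range N, ‖x (k + 1) - x k‖
        ≤ ∑ k ∈ Finset.range N, (A + 2 * s ^ k * B) := by
          apply Finset.sum_le_sum
          intro k _
          have := hdist k
          rwa [hpow k] at this
      _ = N * A + 2 * B * ∑ k ∈ Finset.range N, s ^ k := by
          rw [Finset.sum_add_distrib, Finset.sum_const, Finset.card_range,
            nsmul_eq_mul]
          have he : ∑ k ∈ Finset.range N, 2 * s ^ k * B
              = 2 * B * ∑ k ∈ Finset.range N, s ^ k := by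
            rw [Finset.mul_sum]; exact Finset.sum_congr rfl fun k _ => by ring
          rw [he]
  have hBL : L * B = Real.sqrt (L * D) := by
    rw [hB, Real.sqrt_div hD0, Real.sqrt_mul hL.le]
    have hLs : Real.sqrt L ≠ 0 := by positivity
    calc L * (Real.sqrt D / Real.sqrt L)
        = (Real.sqrt L * Real.sqrt L) * (Real.sqrt D / Real.sqrt L) := by
          rw [Real.mul_self_sqrt hL.le]
      _ = Real.sqrt L * Real.sqrt D := by
          field_simp
  have hfinal : 2 * B * ∑ k ∈ Finset.range N, s ^ k ≤ 4 / μ * Real.sqrt (L * D) := by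
    have h1 : 2 * B * ∑ k ∈ Finset.range N, s ^ k ≤ 2 * B * (2 * L / μ) := by
      apply mul_le_mul_of_nonneg_left hsum (by positivity)
    have h2 : 2 * B * (2 * L / μ) = 4 / μ * (L * B) := by field_simp; ring
    rw [h2, hBL] at h1
    exact h1
  calc ‖x N - x 0‖ ≤ N * A + 2 * B * ∑ k ∈ Finset.range N, s ^ k :=
        le_trans tele hsum2
    _ ≤ N * A + 4 / μ * Real.sqrt (L * D) := by linarith
    _ = 2 * N * Δ * Real.sqrt (1 / L ^ 2 + 1 / (μ * L)) + 4 / μ * Real.sqrt (L * D) := by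
        rw [hA]; ring
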